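/- Let d be a positive integer, Σ and Σ̂ d×d symmetric positive definite real matrices, A and Â d×d real matrices, b, b̂ ∈ ℝ^d, and Θ ⊆ ℝ^d. Define ℓ(θ) := A·θ − b and ℓ̂(θ) := Â·θ − b̂, set M := Σ^{−1/2}·Σ̂·Σ^{−1/2} with largest and smallest eigenvalues λmax(M) and λmin(M), and κ(M) := λmax(M)/λmin(M). Suppose θ* ∈ Θ satisfies A·θ* = b, suppose ε ≥ 0 is such that |‖Σ^{−1/2}·ℓ(θ)‖₂ − ‖Σ^{−1/2}·ℓ̂(θ)‖₂| ≤ ε for every θ ∈ Θ, and suppose θ̂ ∈ Θ satisfies ‖Σ̂^{−1/2}·ℓ̂(θ̂)‖₂ ≤ ‖Σ̂^{−1/2}·ℓ̂(θ)‖₂ for every θ ∈ Θ. Then ‖Σ^{−1/2}·ℓ(θ̂)‖₂ ≤ (1 + √(κ(M)))·ε. -/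

import Mathlib

open Matrix MeasureTheory ProbabilityTheory
open scoped Classical

noncomputable section

/-- Euclidean norm of a vector in `ℝ^d`. -/
def norm2 {d : ℕ} (v : Fin d → ℝ) : ℝ := Real.sqrt (v ⬝ᵥ v)

/-- The positive semidefinite square root of a matrix (junk value `0` if not PSD). -/
def psdSqrt {d : ℕ} (M : Matrix (Fin d) (Fin d) ℝ) : Matrix (Fin d) (Fin d) ℝ :=
  if h : M.PosSemidef then
    (h.1.eigenvectorUnitary : Matrix (Fin d) (Fin d) ℝ) *
      diagonal ((↑) ∘ (fun i => Real.sqrt (h.1.eigenvalues i))) *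
      (star h.1.eigenvectorUnitary : Matrix (Fin d) (Fin d) ℝ)
  else 0

/-- Largest eigenvalue of a symmetric matrix (junk value `0` if not symmetric). -/
def lamMax {d : ℕ} (M : Matrix (Fin d) (Fin d) ℝ) : ℝ :=
  if h : M.IsHermitian then ⨆ i, h.eigenvalues i else 0

/-- Smallest eigenvalue of a symmetric matrix (junk value `0` if not symmetric). -/
def lamMin {d : ℕ} (M : Matrix (Fin d) (Fin d) ℝ) : ℝ :=
  if h : M.IsHermitian then ⨅ i, h.eigenvalues i else 0

/-- Smallest singular value. -/
def sigmaMin {d : ℕ} (M : Matrix (Fin d) (Fin d) ℝ) : ℝ := Real.sqrt (lamMin (Mᵀ * M))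

/-- Largest singular value (operator norm). -/
def sigmaMax {d : ℕ} (M : Matrix (Fin d) (Fin d) ℝ) : ℝ := Real.sqrt (lamMax (Mᵀ * M))

/-- Empirical covariance matrix `(1/n) ∑ᵢ WᵢWᵢᵀ`. -/
def empSigma {d n : ℕ} (W : Fin n → Fin d → ℝ) : Matrix (Fin d) (Fin d) ℝ :=
  (n : ℝ)⁻¹ • ∑ i, vecMulVec (W i) (W i)

/-- Empirical LSTDQ matrix `(1/n) ∑ᵢ Wᵢ(Wᵢ - γWᵢ')ᵀ`. -/
def empA {d n : ℕ} (γ : ℝ) (W W' : Fin n → Fin d → ℝ) : Matrix (Fin d) (Fin d) ℝ :=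
  (n : ℝ)⁻¹ • ∑ i, vecMulVec (W i) (W i - γ • W' i)

/-- Empirical LSTDQ vector `(1/n) ∑ᵢ RᵢWᵢ`. -/
def empb {d n : ℕ} (W : Fin n → Fin d → ℝ) (R : Fin n → ℝ) : Fin d → ℝ :=
  (n : ℝ)⁻¹ • ∑ i, R i • W i

namespace Stmt16Aux

variable {d : ℕ}

lemma herm_tr {P : Matrix (Fin d) (Fin d) ℝ} (h : P.IsHermitian) : Pᵀ = P := by
  rw [← Matrix.conjTranspose_eq_transpose_of_trivial, h.eq]

lemma dot_sym' {P : Matrix (Fin d) (Fin d) ℝ} (hP : Pᵀ = P) (a b : Fin d → ℝ) :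
    a ⬝ᵥ (P *ᵥ b) = (P *ᵥ a) ⬝ᵥ b := by
  rw [Matrix.dotProduct_mulVec, ← Matrix.mulVec_transpose, hP]

lemma sq_dot {H : Matrix (Fin d) (Fin d) ℝ} (hH : Hᵀ = H) (v : Fin d → ℝ) :
    (H *ᵥ v) ⬝ᵥ (H *ᵥ v) = v ⬝ᵥ ((H * H) *ᵥ v) := by
  rw [dot_sym' hH, Matrix.mulVec_mulVec, dotProduct_comm]

lemma quad_eq_sum {M : Matrix (Fin d) (Fin d) ℝ} (hM : M.IsHermitian) (x : Fin d → ℝ) :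
    x ⬝ᵥ (M *ᵥ x) =
      ∑ i, hM.eigenvalues i *
        (((hM.eigenvectorUnitary : Matrix (Fin d) (Fin d) ℝ)ᵀ *ᵥ x) i *
          ((hM.eigenvectorUnitary : Matrix (Fin d) (Fin d) ℝ)ᵀ *ᵥ x) i) := by
  set U := (hM.eigenvectorUnitary : Matrix (Fin d) (Fin d) ℝ) with hU
  have hstar : star U = Uᵀ := by
    rw [Matrix.star_eq_conjTranspose, Matrix.conjTranspose_eq_transpose_of_trivial]
  have hspec : M = U * Matrix.diagonal hM.eigenvalues * Uᵀ := by
    have := hM.spectral_theorem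
    rw [Unitary.conjStarAlgAut_apply, ← hU, hstar] at this
    simpa [RCLike.ofReal_real_eq_id] using this
  set y := Uᵀ *ᵥ x with hy
  have h1 : M *ᵥ x = U *ᵥ (Matrix.diagonal hM.eigenvalues *ᵥ y) := by
    conv_lhs => rw [hspec]
    rw [← Matrix.mulVec_mulVec, ← Matrix.mulVec_mulVec]
  rw [h1, Matrix.dotProduct_mulVec, ← Matrix.mulVec_transpose]
  simp [dotProduct, Matrix.mulVec_diagonal, mul_comm, mul_left_comm, ← hy]

lemma normsq_eq_sum {M : Matrix (Fin d) (Fin d) ℝ} (hM : M.IsHermitian) (x : Fin d → ℝ) :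
    x ⬝ᵥ x =
      ∑ i, (((hM.eigenvectorUnitary : Matrix (Fin d) (Fin d) ℝ)ᵀ *ᵥ x) i *
          ((hM.eigenvectorUnitary : Matrix (Fin d) (Fin d) ℝ)ᵀ *ᵥ x) i) := by
  set U := (hM.eigenvectorUnitary : Matrix (Fin d) (Fin d) ℝ) with hU
  have hstar : star U = Uᵀ := by
    rw [Matrix.star_eq_conjTranspose, Matrix.conjTranspose_eq_transpose_of_trivial]
  have hUU : U * Uᵀ = 1 := by
    have := (Matrix.mem_unitaryGroup_iff).mp hM.eigenvectorUnitary.2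
    rwa [hstar] at this
  have : (Uᵀ *ᵥ x) ⬝ᵥ (Uᵀ *ᵥ x) = x ⬝ᵥ x := by
    rw [Matrix.dotProduct_mulVec, Matrix.vecMul_transpose, Matrix.mulVec_mulVec, hUU,
      Matrix.one_mulVec]
  rw [← this]
  simp [dotProduct]

lemma rayleigh_upper (hd : 0 < d) {M : Matrix (Fin d) (Fin d) ℝ} (hM : M.IsHermitian)
    (x : Fin d → ℝ) : x ⬝ᵥ (M *ᵥ x) ≤ lamMax M * (x ⬝ᵥ x) := by
  have : Nonempty (Fin d) := Fin.pos_iff_nonempty.mp hd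
  rw [lamMax, dif_pos hM, quad_eq_sum hM x, normsq_eq_sum hM x, Finset.mul_sum]
  refine Finset.sum_le_sum fun i _ => ?_
  exact mul_le_mul_of_nonneg_right
    (le_ciSup (Set.Finite.bddAbove (Set.finite_range _)) i) (mul_self_nonneg _)

lemma rayleigh_lower (hd : 0 < d) {M : Matrix (Fin d) (Fin d) ℝ} (hM : M.IsHermitian)
    (x : Fin d → ℝ) : lamMin M * (x ⬝ᵥ x) ≤ x ⬝ᵥ (M *ᵥ x) := by
  have : Nonempty (Fin d) := Fin.pos_iff_nonempty.mp hd
  rw [lamMin, dif_pos hM, quad_eq_sum hM x, normsq_eq_sum hM x, Finset.mul_sum]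
  refine Finset.sum_le_sum fun i _ => ?_
  exact mul_le_mul_of_nonneg_right
    (ciInf_le (Set.Finite.bddBelow (Set.finite_range _)) i) (mul_self_nonneg _)

lemma lamMin_pos (hd : 0 < d) {M : Matrix (Fin d) (Fin d) ℝ} (hM : M.PosDef) :
    0 < lamMin M := by
  have : Nonempty (Fin d) := Fin.pos_iff_nonempty.mp hd
  obtain ⟨i₀, hi₀⟩ := Finite.exists_min hM.1.eigenvalues
  rw [lamMin, dif_pos hM.1]
  exact lt_of_lt_of_le (hM.eigenvalues_pos i₀) (le_ciInf hi₀)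

lemma inv_quad_le {P Q : Matrix (Fin d) (Fin d) ℝ} (hP : P.PosDef) (hQ : Q.PosDef)
    (h : ∀ y, y ⬝ᵥ (P *ᵥ y) ≤ y ⬝ᵥ (Q *ᵥ y)) (x : Fin d → ℝ) :
    x ⬝ᵥ (Q⁻¹ *ᵥ x) ≤ x ⬝ᵥ (P⁻¹ *ᵥ x) := by
  set y := Q⁻¹ *ᵥ x with hy
  set z := P⁻¹ *ᵥ x with hz
  have keyQ : Q *ᵥ y = x := by
    rw [hy, Matrix.mulVec_mulVec, Matrix.mul_nonsing_inv _ (isUnit_iff_ne_zero.mpr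
      hQ.det_pos.ne'), Matrix.one_mulVec]
  have keyP : P *ᵥ z = x := by
    rw [hz, Matrix.mulVec_mulVec, Matrix.mul_nonsing_inv _ (isUnit_iff_ne_zero.mpr
      hP.det_pos.ne'), Matrix.one_mulVec]
  have hnn : 0 ≤ (y - z) ⬝ᵥ (P *ᵥ (y - z)) := by
    simpa using hP.posSemidef.dotProduct_mulVec_nonneg (y - z)
  have hexp : (y - z) ⬝ᵥ (P *ᵥ (y - z)) =
      y ⬝ᵥ (P *ᵥ y) - y ⬝ᵥ x - x ⬝ᵥ y + x ⬝ᵥ z := by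
    rw [Matrix.mulVec_sub, dotProduct_sub, sub_dotProduct, sub_dotProduct]
    have h1 : y ⬝ᵥ (P *ᵥ z) = y ⬝ᵥ x := by rw [keyP]
    have h2 : z ⬝ᵥ (P *ᵥ y) = x ⬝ᵥ y := by rw [dot_sym' (herm_tr hP.1), keyP]
    have h3 : z ⬝ᵥ (P *ᵥ z) = x ⬝ᵥ z := by rw [keyP, dotProduct_comm]
    rw [h1, h2, h3]
    ring
  have hPQ : y ⬝ᵥ (P *ᵥ y) ≤ y ⬝ᵥ x := by
    have := h y
    rwa [keyQ] at this
  have hyx : y ⬝ᵥ x = x ⬝ᵥ y := dotProduct_comm _ _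
  have hgoal1 : x ⬝ᵥ (Q⁻¹ *ᵥ x) = x ⬝ᵥ y := rfl
  have hgoal2 : x ⬝ᵥ (P⁻¹ *ᵥ x) = x ⬝ᵥ z := rfl
  rw [hgoal1, hgoal2]
  linarith [hexp ▸ hnn]

lemma posDef_conj {B C : Matrix (Fin d) (Fin d) ℝ} (hB : B.PosDef) (hC : IsUnit C.det)
    (hCh : Cᵀ = C) : (C * B * C).PosDef := by
  refine Matrix.PosDef.of_dotProduct_mulVec_pos ?_ ?_
  · have hBh : Bᵀ = B := herm_tr hB.1
    rw [Matrix.IsHermitian, Matrix.conjTranspose_eq_transpose_of_trivial,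
      Matrix.transpose_mul, Matrix.transpose_mul, hCh, hBh, mul_assoc]
  · intro x hx
    have hx' : C *ᵥ x ≠ 0 := by
      intro h0
      apply hx
      have : C⁻¹ *ᵥ (C *ᵥ x) = x := by
        rw [Matrix.mulVec_mulVec, Matrix.nonsing_inv_mul _ hC, Matrix.one_mulVec]
      rw [← this, h0, Matrix.mulVec_zero]
    have : star x ⬝ᵥ ((C * B * C) *ᵥ x) = (C *ᵥ x) ⬝ᵥ (B *ᵥ (C *ᵥ x)) := by
      simp only [star_trivial, ← Matrix.mulVec_mulVec]
      rw [Matrix.dotProduct_mulVec, ← Matrix.mulVec_transpose, hCh]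
    rw [this]
    simpa using hB.dotProduct_mulVec_pos hx'

lemma posDef_smul {B : Matrix (Fin d) (Fin d) ℝ} (hB : B.PosDef) {c : ℝ} (hc : 0 < c) :
    (c • B).PosDef := by
  refine Matrix.PosDef.of_dotProduct_mulVec_pos ?_ ?_
  · have hBh : Bᵀ = B := herm_tr hB.1
    rw [Matrix.IsHermitian, Matrix.conjTranspose_smul,
      Matrix.conjTranspose_eq_transpose_of_trivial, hBh]
    simp
  · intro x hx
    rw [Matrix.smul_mulVec, dotProduct_smul]
    exact mul_pos hc (by simpa using hB.dotProduct_mulVec_pos hx)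

lemma psdSqrt_mul_self {M : Matrix (Fin d) (Fin d) ℝ} (h : M.PosSemidef) :
    psdSqrt M * psdSqrt M = M := by
  rw [psdSqrt, dif_pos h]
  have hUU := Unitary.star_mul_self_of_mem h.1.eigenvectorUnitary.2
  have hspec := h.1.spectral_theorem
  rw [Unitary.conjStarAlgAut_apply] at hspec
  conv_rhs => rw [hspec]
  simp only [mul_assoc]
  rw [← mul_assoc _ (h.1.eigenvectorUnitary : Matrix (Fin d) (Fin d) ℝ), hUU, one_mul,
    ← mul_assoc (diagonal _) (diagonal _), diagonal_mul_diagonal]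
  congr 3
  funext i
  simp [Real.mul_self_sqrt (h.eigenvalues_nonneg i)]

lemma psdSqrt_transpose {M : Matrix (Fin d) (Fin d) ℝ} (h : M.PosSemidef) :
    (psdSqrt M)ᵀ = psdSqrt M := by
  rw [psdSqrt, dif_pos h, transpose_mul, transpose_mul, diagonal_transpose, mul_assoc]
  simp only [Matrix.star_eq_conjTranspose, conjTranspose_eq_transpose_of_trivial,
    transpose_transpose]

end Stmt16Aux

/-- (deterministic oracle inequality in the proof of Theorem E.1 of the
paper) for the loss-minimization variant of LSTDQ. -/
theorem stmt16 (d : ℕ) (hd : 0 < d) (Sig Sighat A Ahat : Matrix (Fin d) (Fin d) ℝ)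
    (hSig : Sig.PosDef) (hSighat : Sighat.PosDef) (b bhat : Fin d → ℝ)
    (Θ : Set (Fin d → ℝ)) (θstar : Fin d → ℝ) (hθstar : θstar ∈ Θ)
    (hAθ : A *ᵥ θstar = b) (ε : ℝ) (hε : 0 ≤ ε)
    (hconc : ∀ θ ∈ Θ,
      |norm2 ((psdSqrt Sig)⁻¹ *ᵥ (A *ᵥ θ - b)) -
          norm2 ((psdSqrt Sig)⁻¹ *ᵥ (Ahat *ᵥ θ - bhat))| ≤ ε)
    (θhat : Fin d → ℝ) (hθhat : θhat ∈ Θ)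
    (hmin : ∀ θ ∈ Θ,
      norm2 ((psdSqrt Sighat)⁻¹ *ᵥ (Ahat *ᵥ θhat - bhat)) ≤
        norm2 ((psdSqrt Sighat)⁻¹ *ᵥ (Ahat *ᵥ θ - bhat))) :
    norm2 ((psdSqrt Sig)⁻¹ *ᵥ (A *ᵥ θhat - b)) ≤
      (1 + Real.sqrt (lamMax ((psdSqrt Sig)⁻¹ * Sighat * (psdSqrt Sig)⁻¹) /
          lamMin ((psdSqrt Sig)⁻¹ * Sighat * (psdSqrt Sig)⁻¹))) * ε := by
  haveI : Nonempty (Fin d) := Fin.pos_iff_nonempty.mp hd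
  set S := psdSqrt Sig with hSdef0
  set Sh := psdSqrt Sighat with hShdef0
  have hSdef : S = psdSqrt Sig := hSdef0
  have hShdef : Sh = psdSqrt Sighat := hShdef0
  have hSmul : S * S = Sig := by rw [hSdef]; exact Stmt16Aux.psdSqrt_mul_self hSig.posSemidef
  have hShmul : Sh * Sh = Sighat := by
    rw [hShdef]; exact Stmt16Aux.psdSqrt_mul_self hSighat.posSemidef
  have hSherm : Sᵀ = S := by
    rw [hSdef]; exact Stmt16Aux.psdSqrt_transpose hSig.posSemidef
  have hShherm : Shᵀ = Sh := by
    rw [hShdef]; exact Stmt16Aux.psdSqrt_transpose hSighat.posSemidef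
  have hSdet : S.det ≠ 0 := by
    intro h
    exact hSig.det_pos.ne' (by rw [← hSmul, Matrix.det_mul, h, mul_zero])
  have hShdet : Sh.det ≠ 0 := by
    intro h
    exact hSighat.det_pos.ne' (by rw [← hShmul, Matrix.det_mul, h, mul_zero])
  have hSinvt : (S⁻¹)ᵀ = S⁻¹ := by rw [Matrix.transpose_nonsing_inv, hSherm]
  have hShinvt : (Sh⁻¹)ᵀ = Sh⁻¹ := by rw [Matrix.transpose_nonsing_inv, hShherm]
  have hSinv2 : S⁻¹ * S⁻¹ = Sig⁻¹ := by rw [← hSmul, Matrix.mul_inv_rev]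
  have hShinv2 : Sh⁻¹ * Sh⁻¹ = Sighat⁻¹ := by rw [← hShmul, Matrix.mul_inv_rev]
  have hnormS : ∀ v, norm2 (S⁻¹ *ᵥ v) = Real.sqrt (v ⬝ᵥ (Sig⁻¹ *ᵥ v)) := by
    intro v
    unfold norm2
    rw [Stmt16Aux.sq_dot hSinvt, hSinv2]
  have hnormSh : ∀ v, norm2 (Sh⁻¹ *ᵥ v) = Real.sqrt (v ⬝ᵥ (Sighat⁻¹ *ᵥ v)) := by
    intro v
    unfold norm2
    rw [Stmt16Aux.sq_dot hShinvt, hShinv2]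
  set M := S⁻¹ * Sighat * S⁻¹ with hMdef
  have hMpd : M.PosDef := by
    apply Stmt16Aux.posDef_conj hSighat _ hSinvt
    rw [Matrix.det_nonsing_inv, Ring.inverse_eq_inv]
    exact isUnit_iff_ne_zero.mpr (inv_ne_zero hSdet)
  have hlmin : 0 < lamMin M := Stmt16Aux.lamMin_pos hd hMpd
  have hlminmax : lamMin M ≤ lamMax M := by
    rw [lamMin, lamMax, dif_pos hMpd.1, dif_pos hMpd.1]
    exact le_trans (ciInf_le (Set.Finite.bddBelow (Set.finite_range _)) (Classical.arbitrary _))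
      (le_ciSup (Set.Finite.bddAbove (Set.finite_range _)) _)
  have hlmax : 0 < lamMax M := lt_of_lt_of_le hlmin hlminmax
  have hSinvS : ∀ y, S⁻¹ *ᵥ (S *ᵥ y) = y := by
    intro y
    rw [Matrix.mulVec_mulVec, Matrix.nonsing_inv_mul _ (isUnit_iff_ne_zero.mpr hSdet),
      Matrix.one_mulVec]
  have hquadM : ∀ y, (S *ᵥ y) ⬝ᵥ (M *ᵥ (S *ᵥ y)) = y ⬝ᵥ (Sighat *ᵥ y) := by
    intro y
    have h1 : M *ᵥ (S *ᵥ y) = S⁻¹ *ᵥ (Sighat *ᵥ y) := by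
      rw [hMdef, ← Matrix.mulVec_mulVec, ← Matrix.mulVec_mulVec, hSinvS]
    rw [h1, Stmt16Aux.dot_sym' hSinvt, hSinvS]
  have hnormSy : ∀ y, (S *ᵥ y) ⬝ᵥ (S *ᵥ y) = y ⬝ᵥ (Sig *ᵥ y) := by
    intro y
    rw [Stmt16Aux.sq_dot hSherm, hSmul]
  have K1 : ∀ y, y ⬝ᵥ (Sighat *ᵥ y) ≤ lamMax M * (y ⬝ᵥ (Sig *ᵥ y)) := by
    intro y
    have := Stmt16Aux.rayleigh_upper hd hMpd.1 (S *ᵥ y)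
    rwa [hquadM, hnormSy] at this
  have K2 : ∀ y, lamMin M * (y ⬝ᵥ (Sig *ᵥ y)) ≤ y ⬝ᵥ (Sighat *ᵥ y) := by
    intro y
    have := Stmt16Aux.rayleigh_lower hd hMpd.1 (S *ᵥ y)
    rwa [hquadM, hnormSy] at this
  have hSigdetu : IsUnit Sig.det := isUnit_iff_ne_zero.mpr hSig.det_pos.ne'
  have I1 : ∀ v, v ⬝ᵥ (Sig⁻¹ *ᵥ v) ≤ lamMax M * (v ⬝ᵥ (Sighat⁻¹ *ᵥ v)) := by
    intro v
    have hQ : (lamMax M • Sig).PosDef := Stmt16Aux.posDef_smul hSig hlmax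
    have h := Stmt16Aux.inv_quad_le hSighat hQ (fun y => by
      rw [Matrix.smul_mulVec, dotProduct_smul, smul_eq_mul]
      exact K1 y) v
    letI := invertibleOfNonzero hlmax.ne'
    rw [Matrix.inv_smul Sig _ hSigdetu, invOf_eq_inv, Matrix.smul_mulVec,
      dotProduct_smul, smul_eq_mul] at h
    calc v ⬝ᵥ (Sig⁻¹ *ᵥ v) = lamMax M * ((lamMax M)⁻¹ * (v ⬝ᵥ (Sig⁻¹ *ᵥ v))) := by
          field_simp
      _ ≤ lamMax M * (v ⬝ᵥ (Sighat⁻¹ *ᵥ v)) := mul_le_mul_of_nonneg_left h hlmax.le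
  have I2 : ∀ v, v ⬝ᵥ (Sighat⁻¹ *ᵥ v) ≤ (lamMin M)⁻¹ * (v ⬝ᵥ (Sig⁻¹ *ᵥ v)) := by
    intro v
    have hP : (lamMin M • Sig).PosDef := Stmt16Aux.posDef_smul hSig hlmin
    have h := Stmt16Aux.inv_quad_le hP hSighat (fun y => by
      rw [Matrix.smul_mulVec, dotProduct_smul, smul_eq_mul]
      exact K2 y) v
    letI := invertibleOfNonzero hlmin.ne'
    rwa [Matrix.inv_smul Sig _ hSigdetu, invOf_eq_inv, Matrix.smul_mulVec,
      dotProduct_smul, smul_eq_mul] at h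
  have N1 : ∀ v, norm2 (S⁻¹ *ᵥ v) ≤ Real.sqrt (lamMax M) * norm2 (Sh⁻¹ *ᵥ v) := by
    intro v
    rw [hnormS, hnormSh, ← Real.sqrt_mul hlmax.le]
    exact Real.sqrt_le_sqrt (I1 v)
  have N2 : ∀ v, norm2 (Sh⁻¹ *ᵥ v) ≤ Real.sqrt ((lamMin M)⁻¹) * norm2 (S⁻¹ *ᵥ v) := by
    intro v
    rw [hnormSh, hnormS, ← Real.sqrt_mul (inv_nonneg.mpr hlmin.le)]
    exact Real.sqrt_le_sqrt (I2 v)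
  have hn2 : ∀ v : Fin d → ℝ, 0 ≤ norm2 v := fun v => Real.sqrt_nonneg _
  have hzero : norm2 (S⁻¹ *ᵥ (A *ᵥ θstar - b)) = 0 := by
    rw [hAθ, sub_self, Matrix.mulVec_zero]
    unfold norm2
    simp
  have h5 : norm2 (S⁻¹ *ᵥ (Ahat *ᵥ θstar - bhat)) ≤ ε := by
    have h := hconc θstar hθstar
    rw [hzero, zero_sub, abs_neg, abs_of_nonneg (hn2 _)] at h
    exact h
  have h1 : norm2 (S⁻¹ *ᵥ (A *ᵥ θhat - b)) ≤ norm2 (S⁻¹ *ᵥ (Ahat *ᵥ θhat - bhat)) + ε := by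
    have h := abs_le.mp (hconc θhat hθhat)
    linarith [h.1, h.2]
  have h2 := N1 (Ahat *ᵥ θhat - bhat)
  have h3 := hmin θstar hθstar
  have h4 := N2 (Ahat *ᵥ θstar - bhat)
  have hsqrtdiv : Real.sqrt (lamMax M / lamMin M) =
      Real.sqrt (lamMax M) * Real.sqrt ((lamMin M)⁻¹) := by
    rw [div_eq_mul_inv, Real.sqrt_mul hlmax.le]
  have hs1 : (0:ℝ) ≤ Real.sqrt (lamMax M) := Real.sqrt_nonneg _
  have hs2 : (0:ℝ) ≤ Real.sqrt ((lamMin M)⁻¹) := Real.sqrt_nonneg _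
  have chain : norm2 (S⁻¹ *ᵥ (Ahat *ᵥ θhat - bhat)) ≤
      Real.sqrt (lamMax M) * (Real.sqrt ((lamMin M)⁻¹) * ε) := by
    calc norm2 (S⁻¹ *ᵥ (Ahat *ᵥ θhat - bhat))
        ≤ Real.sqrt (lamMax M) * norm2 (Sh⁻¹ *ᵥ (Ahat *ᵥ θhat - bhat)) := h2
      _ ≤ Real.sqrt (lamMax M) * norm2 (Sh⁻¹ *ᵥ (Ahat *ᵥ θstar - bhat)) :=
          mul_le_mul_of_nonneg_left h3 hs1
      _ ≤ Real.sqrt (lamMax M) * (Real.sqrt ((lamMin M)⁻¹) *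
            norm2 (S⁻¹ *ᵥ (Ahat *ᵥ θstar - bhat))) := mul_le_mul_of_nonneg_left h4 hs1
      _ ≤ Real.sqrt (lamMax M) * (Real.sqrt ((lamMin M)⁻¹) * ε) := by
          apply mul_le_mul_of_nonneg_left _ hs1
          exact mul_le_mul_of_nonneg_left h5 hs2
  rw [hsqrtdiv]
  calc norm2 (S⁻¹ *ᵥ (A *ᵥ θhat - b))
      ≤ norm2 (S⁻¹ *ᵥ (Ahat *ᵥ θhat - bhat)) + ε := h1
    _ ≤ Real.sqrt (lamMax M) * (Real.sqrt ((lamMin M)⁻¹) * ε) + ε := by linarith [chain]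
    _ = (1 + Real.sqrt (lamMax M) * Real.sqrt ((lamMin M)⁻¹)) * ε := by ring

end
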